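/- Let G be a (K_3, P_1+S_{1,1,2})-free graph with an induced 5-cycle v_1⋯v_5 v_1. Let W_1 be the set of vertices outside the cycle whose only neighbour on the cycle is v_1, and W_3 the set of vertices outside the cycle whose only neighbour on the cycle is v_3. Then every vertex of W_1 is adjacent to every vertex of W_3. -/

import Mathlib

/-- The cycle on `k` vertices. -/
def cyc (k : ℕ) : SimpleGraph (Fin k) :=
  SimpleGraph.fromRel (fun i j => j.val = (i.val + 1) % k)

/-- P₁ + S_{1,1,2}: an isolated vertex (0) together with the tree on
{1,2,3,4,5} with centre 1 adjacent to 2, 3, 4 and 4 adjacent to 5. -/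
def P1S112 : SimpleGraph (Fin 6) :=
  SimpleGraph.fromRel (fun a b => (a.val, b.val) ∈ [(1,2),(1,3),(1,4),(4,5)])

instance : DecidableRel (cyc 5).Adj := fun a b =>
  decidable_of_iff _ (SimpleGraph.fromRel_adj _ a b).symm

instance : DecidableRel P1S112.Adj := fun a b =>
  decidable_of_iff _ (SimpleGraph.fromRel_adj _ a b).symm

/- The cycle vertices are v₁ = f 0, …, v₅ = f 4.  `W1` consists of the vertices
outside the cycle whose only neighbour on the cycle is v₁ (= f 0), and `W3` of
those whose only neighbour on the cycle is v₃ (= f 2). -/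
set_option maxHeartbeats 1000000 in
theorem statement_9 {V : Type*} (G : SimpleGraph V) (htri : G.CliqueFree 3)
    (hfree : IsEmpty (P1S112 ↪g G)) (f : cyc 5 ↪g G) (W1 W3 : Set V)
    (hW1 : W1 = {v | v ∉ Set.range f ∧ ∀ i, G.Adj v (f i) ↔ i = 0})
    (hW3 : W3 = {v | v ∉ Set.range f ∧ ∀ i, G.Adj v (f i) ↔ i = 2}) :
    ∀ a ∈ W1, ∀ b ∈ W3, G.Adj a b := by
  subst hW1 hW3
  rintro a ⟨haR, ha⟩ b ⟨hbR, hb⟩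
  by_contra hab
  have hab' : ¬ G.Adj b a := fun h => hab h.symm
  have haf : ∀ i, a ≠ f i := fun i h => haR ⟨i, h.symm⟩
  have hbf : ∀ i, b ≠ f i := fun i h => hbR ⟨i, h.symm⟩
  have hfa : ∀ i, f i ≠ a := fun i => (haf i).symm
  have hfb : ∀ i, f i ≠ b := fun i => (hbf i).symm
  have hba : b ≠ a := by
    intro h; subst h
    have := (hb 0).1 ((ha 0).2 rfl)
    simp at this
  have hab2 : a ≠ b := hba.symm
  have ha' : ∀ i, G.Adj (f i) a ↔ i = 0 := fun i => (G.adj_comm _ _).trans (ha i)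
  have hb' : ∀ i, G.Adj (f i) b ↔ i = 2 := fun i => (G.adj_comm _ _).trans (hb i)
  have hmap : ∀ i j : Fin 5, G.Adj (f i) (f j) ↔ (cyc 5).Adj i j := fun i j => f.map_adj_iff
  have hirr : ∀ v, ¬ G.Adj v v := fun v => G.loopless.irrefl v
  have m0 : ![b, f 0, f 1, a, f 4, f 3] 0 = b := rfl
  have m1 : ![b, f 0, f 1, a, f 4, f 3] 1 = f 0 := rfl
  have m2 : ![b, f 0, f 1, a, f 4, f 3] 2 = f 1 := rfl
  have m3 : ![b, f 0, f 1, a, f 4, f 3] 3 = a := rfl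
  have m4 : ![b, f 0, f 1, a, f 4, f 3] 4 = f 4 := rfl
  have m5 : ![b, f 0, f 1, a, f 4, f 3] 5 = f 3 := rfl
  have hinj : Function.Injective ![b, f 0, f 1, a, f 4, f 3] := by
    intro i j hij
    fin_cases i <;> fin_cases j <;>
      simp only [m0, m1, m2, m3, m4, m5] at hij ⊢ <;>
      first
        | rfl
        | exact absurd hij (hbf _)
        | exact absurd hij (hfb _)
        | exact absurd hij (haf _)
        | exact absurd hij (hfa _)
        | exact absurd hij hba
        | exact absurd hij hab2
        | exact absurd (f.injective hij) (by decide)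
  have hadj : ∀ i j : Fin 6,
      G.Adj (![b, f 0, f 1, a, f 4, f 3] i) (![b, f 0, f 1, a, f 4, f 3] j) ↔ P1S112.Adj i j := by
    intro i j
    fin_cases i <;> fin_cases j <;>
      simp only [m0, m1, m2, m3, m4, m5] <;>
      first
        | exact iff_of_false (hirr _) (by decide)
        | exact iff_of_false hab (by decide)
        | exact iff_of_false hab' (by decide)
        | exact iff_of_true ((ha _).2 (by decide)) (by decide)
        | exact iff_of_true ((ha' _).2 (by decide)) (by decide)
        | exact iff_of_true ((hb _).2 (by decide)) (by decide)
        | exact iff_of_true ((hb' _).2 (by decide)) (by decide)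
        | exact iff_of_true ((hmap _ _).2 (by decide)) (by decide)
        | exact iff_of_false (fun h => absurd ((ha _).1 h) (by decide)) (by decide)
        | exact iff_of_false (fun h => absurd ((ha' _).1 h) (by decide)) (by decide)
        | exact iff_of_false (fun h => absurd ((hb _).1 h) (by decide)) (by decide)
        | exact iff_of_false (fun h => absurd ((hb' _).1 h) (by decide)) (by decide)
        | exact iff_of_false (fun h => absurd ((hmap _ _).1 h) (by decide)) (by decide)
  exact hfree.false ⟨⟨_, hinj⟩, hadj _ _⟩
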